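/- Let N ≥ 2 and let A = (A_n)_{n∈ℤ/2Nℤ} be reals with Σ_{l=1}^{N} A_{2l} < Σ_{l=1}^{N} A_{2l−1}, and let Ā be the image of A under the tropical periodic Toda lattice evolution. Then for every 1 ≤ k ≤ N, the quantity H_k := min over all cyclically sparse subsets S of ℤ/2Nℤ with |S| = k of Σ_{i∈S} A_i is conserved, i.e. min_S Σ_{i∈S} Ā_i = min_S Σ_{i∈S} A_i; moreover Σ_{i∈ℤ/2Nℤ} Ā_i = Σ_{i∈ℤ/2Nℤ} A_i. -/

import Mathlib

namespace TT

variable {N : ℕ}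

lemma cast_add_period (j t : ℤ) :
    ((j + 2*N*t : ℤ) : ZMod (2*N)) = ((j : ℤ) : ZMod (2*N)) := by
  have h2 : ((2*N : ℕ) : ZMod (2*N)) = 0 := ZMod.natCast_self _
  push_cast at h2 ⊢
  rw [h2]; ring

section defs
variable (A : ZMod (2*N) → ℝ)

def QQ (n : ℤ) : ℝ := A ((2*n : ℤ) : ZMod (2*N))
def EE (n : ℤ) : ℝ := A ((2*n+1 : ℤ) : ZMod (2*N))
def dd (n : ℤ) : ℝ := EE A n - QQ A n

lemma QQ_per (n t : ℤ) : QQ A (n + N*t) = QQ A n := by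
  unfold QQ
  rw [show (2*(n + N*t) : ℤ) = 2*n + 2*N*t by ring, cast_add_period]

lemma EE_per (n t : ℤ) : EE A (n + N*t) = EE A n := by
  unfold EE
  rw [show (2*(n + N*t)+1 : ℤ) = (2*n+1) + 2*N*t by ring, cast_add_period]

lemma dd_per (n t : ℤ) : dd A (n + N*t) = dd A n := by
  unfold dd; rw [QQ_per A, EE_per A]

/-- partial sums entering Y -/
def gg (n : ℤ) (k : ℕ) : ℝ := ∑ l ∈ Finset.Icc 1 k, (QQ A (n - l) - EE A (n - l))

def YY (hN : 2 ≤ N) (n : ℤ) : ℝ :=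
  (Finset.range N).sup' (Finset.nonempty_range_iff.mpr (Nat.pos_iff_ne_zero.mp (by omega))) (gg A n)

def DD : ℝ := ∑ j ∈ Finset.range N, dd A (j : ℤ)

end defs

section sums
variable (A : ZMod (2*N) → ℝ)

lemma sum_shift1 (g : ℤ → ℝ) (hg : ∀ x : ℤ, g (x + N) = g x) (c : ℤ) :
    ∑ j ∈ Finset.range N, g (c + 1 + j) = ∑ j ∈ Finset.range N, g (c + j) := by
  have e1 : ∑ j ∈ Finset.range (N+1), g (c + j)
      = ∑ j ∈ Finset.range N, g (c + j) + g (c + N) :=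
    Finset.sum_range_succ _ N
  have e2 : ∑ j ∈ Finset.range (N+1), g (c + j)
      = ∑ j ∈ Finset.range N, g (c + 1 + j) + g c := by
    rw [Finset.sum_range_succ' (fun j => g (c + j)) N]
    congr 1
    · apply Finset.sum_congr rfl; intro x _
      congr 1; push_cast; ring
    · congr 1; push_cast; ring
  have e3 : g (c + N) = g c := hg c
  linarith [e1, e2]

lemma psum (c : ℤ) : ∑ j ∈ Finset.range N, dd A (c + j) = DD A := by
  have hper : ∀ x : ℤ, dd A (x + N) = dd A x := by
    intro x; have := dd_per A x 1; simpa using this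
  have key : ∀ c : ℤ, ∑ j ∈ Finset.range N, dd A (c + j)
      = ∑ j ∈ Finset.range N, dd A ((0:ℤ) + j) := by
    intro c
    induction c using Int.induction_on with
    | zero => rfl
    | succ k ih => rw [sum_shift1 _ hper, ih]
    | pred k ih =>
        have h := sum_shift1 _ hper (-(k:ℤ)-1)
        have h2 : ∑ j ∈ Finset.range N, dd A (-(k:ℤ)-1+1+j)
            = ∑ j ∈ Finset.range N, dd A (-(k:ℤ)+j) :=
          Finset.sum_congr rfl (fun x _ => by congr 1; ring)
        calc ∑ j ∈ Finset.range N, dd A (-(k:ℤ)-1+j)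
            = ∑ j ∈ Finset.range N, dd A (-(k:ℤ)-1+1+j) := h.symm
          _ = ∑ j ∈ Finset.range N, dd A (-(k:ℤ)+j) := h2
          _ = ∑ j ∈ Finset.range N, dd A ((0:ℤ)+j) := ih
  rw [key c]; unfold DD
  apply Finset.sum_congr rfl; intro x _; rw [zero_add]

lemma gg_sum_period (n : ℤ) :
    ∑ l ∈ Finset.Icc 1 N, (QQ A (n - l) - EE A (n - l)) = -DD A := by
  have h1 : Finset.Icc 1 N = (Finset.range N).image (· + 1) := by
    ext x
    simp only [Finset.mem_Icc, Finset.mem_image, Finset.mem_range]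
    constructor
    · rintro ⟨h1x, h2x⟩; exact ⟨x-1, by omega, by omega⟩
    · rintro ⟨a, ha, rfl⟩; omega
  rw [h1, Finset.sum_image (by intros a _ b _ h; simp only at h; omega)]
  have h2 : ∀ j ∈ Finset.range N, (QQ A (n - (j+1:ℕ)) - EE A (n - (j+1:ℕ)))
      = (fun j : ℕ => -dd A (n - N + j)) (N - 1 - j) := by
    intro j hj
    simp only [Finset.mem_range] at hj
    simp only [dd, neg_sub]
    congr 2 <;> (push_cast [show ((N - 1 - j : ℕ) : ℤ) = (N:ℤ) - 1 - j by omega]) <;> ring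
  rw [Finset.sum_congr rfl h2, Finset.sum_range_reflect (fun j : ℕ => -dd A (n - N + j)) N]
  rw [show -DD A = -∑ j ∈ Finset.range N, dd A ((n - N) + j) by rw [psum]]
  rw [← Finset.sum_neg_distrib]

end sums


section yy
lemma sup'_add_const {β : Type*} (s : Finset β) (H : s.Nonempty) (f : β → ℝ) (c : ℝ) :
    s.sup' H (fun x => c + f x) = c + s.sup' H f := by
  apply le_antisymm
  · exact Finset.sup'_le _ _ fun b hb => add_le_add_right (Finset.le_sup' f hb) c
  · obtain ⟨b, hb, hbe⟩ := Finset.exists_mem_eq_sup' H f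
    rw [hbe]
    exact Finset.le_sup' (fun x => c + f x) hb

lemma sup'_split_bot (F : ℕ → ℝ) (M : ℕ) (hM : 2 ≤ M) :
    (Finset.range M).sup' (Finset.nonempty_range_iff.mpr (Nat.pos_iff_ne_zero.mp (by omega))) F
      = max (F 0) ((Finset.range (M-1)).sup' (Finset.nonempty_range_iff.mpr (by omega))
          (fun j => F (j+1))) := by
  apply le_antisymm
  · apply Finset.sup'_le
    intro k hk
    simp only [Finset.mem_range] at hk
    rcases Nat.eq_zero_or_pos k with h | h
    · subst h; exact le_max_left _ _
    · refine le_trans ?_ (le_max_right _ _)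
      have : k - 1 ∈ Finset.range (M-1) := by simp; omega
      have hle := Finset.le_sup' (fun j => F (j+1)) this
      simp only [Nat.sub_add_cancel h] at hle; exact hle
  · apply max_le
    · exact Finset.le_sup' F (by simp; omega)
    · apply Finset.sup'_le
      intro j hj
      simp only [Finset.mem_range] at hj
      exact Finset.le_sup' F (by simp; omega)

lemma sup'_split_top (F : ℕ → ℝ) (M : ℕ) (hM : 2 ≤ M) :
    (Finset.range M).sup' (Finset.nonempty_range_iff.mpr (Nat.pos_iff_ne_zero.mp (by omega))) F
      = max ((Finset.range (M-1)).sup' (Finset.nonempty_range_iff.mpr (by omega)) F)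
          (F (M-1)) := by
  apply le_antisymm
  · apply Finset.sup'_le
    intro k hk
    simp only [Finset.mem_range] at hk
    rcases Nat.lt_or_ge k (M-1) with h | h
    · exact le_trans (Finset.le_sup' F (by simp; omega)) (le_max_left _ _)
    · have : k = M - 1 := by omega
      subst this; exact le_max_right _ _
  · apply max_le
    · apply Finset.sup'_le
      intro j hj
      simp only [Finset.mem_range] at hj
      exact Finset.le_sup' F (by simp; omega)
    · exact Finset.le_sup' F (by simp; omega)

variable (A : ZMod (2*N) → ℝ)

lemma gg_zero (n : ℤ) : gg A n 0 = 0 := by simp [gg]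

lemma gg_succ (n : ℤ) (j : ℕ) : gg A (n+1) (j+1) = -dd A n + gg A n j := by
  unfold gg
  have h1 : Finset.Icc (1:ℕ) (j+1) = (Finset.Icc 0 j).image (· + 1) := by
    rw [Finset.image_add_right_Icc]
  rw [h1, Finset.sum_image (by intros a _ b _ h; simp only at h; omega)]
  have h2 : Finset.Icc (0:ℕ) j = insert 0 (Finset.Icc 1 j) := by
    ext x; simp [Finset.mem_Icc]; omega
  rw [h2, Finset.sum_insert (by simp)]
  congr 1
  · simp [dd]
  · apply Finset.sum_congr rfl
    intro l _
    congr 2 <;> push_cast <;> ring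

lemma YY_nonneg (hN : 2 ≤ N) (n : ℤ) : 0 ≤ YY A hN n := by
  have h0 : (0:ℕ) ∈ Finset.range N := by simp; omega
  have := Finset.le_sup' (gg A n) h0
  rw [gg_zero] at this
  exact this

lemma YY_per (hN : 2 ≤ N) (n t : ℤ) : YY A hN (n + N*t) = YY A hN n := by
  unfold YY
  apply Finset.sup'_congr _ rfl
  intro k _
  unfold gg
  apply Finset.sum_congr rfl
  intro l _
  rw [show (n + N*t - l : ℤ) = (n - l) + N*t by ring, QQ_per, EE_per]

lemma YY_succ (hN : 2 ≤ N) (hD : 0 < DD A) (n : ℤ) :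
    YY A hN (n+1) = max 0 (YY A hN n - dd A n) := by
  have hne1 : (Finset.range (N-1)).Nonempty := by rw [Finset.nonempty_range_iff]; omega
  set S' := (Finset.range (N-1)).sup' hne1 (gg A n) with hS'
  have step1 : YY A hN (n+1) = max 0 (S' - dd A n) := by
    unfold YY
    rw [sup'_split_bot (gg A (n+1)) N hN, gg_zero]
    congr 1
    have e : ∀ j, gg A (n+1) (j+1) = -dd A n + gg A n j := gg_succ A n
    calc (Finset.range (N-1)).sup' (Finset.nonempty_range_iff.mpr (by omega))
          (fun j => gg A (n+1) (j+1))
        = (Finset.range (N-1)).sup' hne1 (fun j => -dd A n + gg A n j) := by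
          apply Finset.sup'_congr _ rfl
          intro j _; exact e j
      _ = -dd A n + S' := sup'_add_const _ hne1 (gg A n) (-dd A n)
      _ = S' - dd A n := by ring
  have step2 : YY A hN n = max S' (gg A n (N-1)) := by
    unfold YY
    rw [sup'_split_top (gg A n) N hN]
  have step3 : gg A n (N-1) = -DD A + dd A n := by
    have h := gg_sum_period A n
    have hsp : Finset.Icc 1 N = insert N (Finset.Icc 1 (N-1)) := by
      ext x; simp [Finset.mem_Icc]; omega
    rw [hsp, Finset.sum_insert (by simp [Finset.mem_Icc]; omega)] at h
    have hdd : dd A (n - N) = dd A n := by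
      have h2 := dd_per A (n - N) 1
      rw [mul_one, show (n - N + N : ℤ) = n by ring] at h2
      exact h2.symm
    have h3 : QQ A (n - N) - EE A (n - N) = -dd A n := by
      rw [← hdd]; simp [dd]
    rw [h3] at h
    unfold gg
    linarith
  rw [step1, step2, step3]
  have e1 : max S' (-DD A + dd A n) - dd A n = max (S' - dd A n) (-DD A) := by
    rcases le_total S' (-DD A + dd A n) with h | h
    · rw [max_eq_right h, max_eq_right (by linarith)]; ring
    · rw [max_eq_left h, max_eq_left (by linarith)]
  rw [e1, max_comm (S' - dd A n) (-DD A), ← max_assoc]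
  congr 1
  rw [max_eq_left (by linarith)]

end yy

section evol
variable (A Abar : ZMod (2*N) → ℝ) (hN : 2 ≤ N)

/-- the "carrier is exceeded" predicate -/
def bad (n : ℤ) : Prop := YY A hN n < dd A n

lemma inf'_eq_neg_sup' {β : Type*} (s : Finset β) (H : s.Nonempty) (f : β → ℝ) :
    s.inf' H (fun x => - f x) = - s.sup' H f := by
  apply le_antisymm
  · obtain ⟨b, hb, hbe⟩ := Finset.exists_mem_eq_sup' H f
    rw [hbe]
    exact Finset.inf'_le _ hb
  · apply Finset.le_inf'
    intro b hb
    exact neg_le_neg (Finset.le_sup' f hb)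

lemma hD_of_hphase
    (hphase : ∑ l ∈ Finset.range N, A ((2 * l + 2 : ℕ) : ZMod (2 * N))
      < ∑ l ∈ Finset.range N, A ((2 * l + 1 : ℕ) : ZMod (2 * N))) :
    0 < DD A := by
  have h1 : ∀ l : ℕ, A ((2 * l + 2 : ℕ) : ZMod (2 * N)) = QQ A ((0:ℤ) + 1 + l) := by
    intro l; unfold QQ; congr 1; push_cast; ring
  have h2 : ∀ l : ℕ, A ((2 * l + 1 : ℕ) : ZMod (2 * N)) = EE A ((0:ℤ) + l) := by
    intro l; unfold EE; congr 1; push_cast; ring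
  rw [Finset.sum_congr rfl (fun l _ => h1 l), Finset.sum_congr rfl (fun l _ => h2 l)] at hphase
  have hper : ∀ x : ℤ, QQ A (x + N) = QQ A x := by
    intro x; have := QQ_per A x 1; simpa using this
  rw [sum_shift1 (QQ A) hper 0] at hphase
  have : DD A = ∑ l ∈ Finset.range N, EE A ((0:ℤ) + l) - ∑ l ∈ Finset.range N, QQ A ((0:ℤ) + l) := by
    rw [← Finset.sum_sub_distrib, ← psum A 0]
    apply Finset.sum_congr rfl
    intro x _; rfl
  linarith

lemma Qb_eq
    (hev1 : ∀ n : ℤ, Abar ((2 * n : ℤ) : ZMod (2 * N))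
      = min (A ((2 * n + 1 : ℤ) : ZMod (2 * N)))
          (A ((2 * n : ℤ) : ZMod (2 * N)) -
            (Finset.range N).inf' (Finset.nonempty_range_iff.mpr (Nat.pos_iff_ne_zero.mp (by omega)))
              (fun k => ∑ l ∈ Finset.Icc 1 k,
                (A ((2 * (n - (l : ℤ)) + 1 : ℤ) : ZMod (2 * N))
                  - A ((2 * (n - (l : ℤ)) : ℤ) : ZMod (2 * N))))))
    (n : ℤ) : QQ Abar n = min (EE A n) (QQ A n + YY A hN n) := by
  have h := hev1 n
  have hc : ∀ k ∈ Finset.range N, (fun k : ℕ => ∑ l ∈ Finset.Icc 1 k,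
        (A ((2 * (n - (l : ℤ)) + 1 : ℤ) : ZMod (2 * N))
          - A ((2 * (n - (l : ℤ)) : ℤ) : ZMod (2 * N)))) k
      = (fun k : ℕ => - gg A n k) k := by
    intro k _
    simp only [gg, ← Finset.sum_neg_distrib]
    apply Finset.sum_congr rfl
    intro l _
    have e1 : ((2 * (n - (l:ℤ)) + 1 : ℤ) : ZMod (2*N)) = ((2 * (n - l) + 1 : ℤ) : ZMod (2*N)) := rfl
    show A _ - A _ = -(QQ A (n - l) - EE A (n - l))
    unfold QQ EE
    ring_nf
  rw [Finset.inf'_congr _ rfl hc] at h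
  rw [inf'_eq_neg_sup' _ _ (gg A n)] at h
  show Abar ((2 * n : ℤ) : ZMod (2*N)) = _
  rw [h]
  unfold QQ EE YY
  congr 1
  ring
end evol

section evol2
variable (A Abar : ZMod (2*N) → ℝ) (hN : 2 ≤ N)

lemma Eb_eq
    (hev2 : ∀ n : ℤ, Abar ((2 * n + 1 : ℤ) : ZMod (2 * N))
      = A ((2 * n + 1 : ℤ) : ZMod (2 * N)) + A ((2 * n + 2 : ℤ) : ZMod (2 * N))
        - Abar ((2 * n : ℤ) : ZMod (2 * N)))
    (n : ℤ) : EE Abar n = EE A n + QQ A (n+1) - QQ Abar n := by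
  have h := hev2 n
  have e : ((2*(n+1) : ℤ) : ZMod (2*N)) = ((2*n+2 : ℤ) : ZMod (2*N)) := by ring_nf
  show Abar _ = _
  rw [h]
  unfold QQ EE
  rw [e]

lemma bad_Y0 (hD : 0 < DD A) (n : ℤ) (hb : bad A hN n) : YY A hN (n+1) = 0 := by
  rw [YY_succ A hN hD n]
  unfold bad at hb
  rw [max_eq_left (by linarith)]

lemma notbad_Qb (hq : ∀ n, QQ Abar n = min (EE A n) (QQ A n + YY A hN n))
    (n : ℤ) (h : ¬ bad A hN n) : QQ Abar n = EE A n := by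
  rw [hq n]
  unfold bad at h
  push_neg at h
  unfold dd at h
  exact min_eq_left (by linarith)

lemma Qb_id (hq : ∀ n, QQ Abar n = min (EE A n) (QQ A n + YY A hN n)) (hD : 0 < DD A)
    (n : ℤ) : QQ Abar n = QQ A n + YY A hN n - YY A hN (n+1) := by
  rw [hq n, YY_succ A hN hD n]
  rcases le_or_gt (dd A n) (YY A hN n) with h | h
  · rw [min_eq_left (by unfold dd at h; linarith), max_eq_right (by linarith)]
    unfold dd
    ring
  · rw [min_eq_right (by unfold dd at h; linarith), max_eq_left (by linarith)]
    ring

lemma Qb_le (hq : ∀ n, QQ Abar n = min (EE A n) (QQ A n + YY A hN n)) (n : ℤ) :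
    QQ Abar n ≤ EE A n := by
  rw [hq n]; exact min_le_left _ _

lemma Eb_ge (hq : ∀ n, QQ Abar n = min (EE A n) (QQ A n + YY A hN n))
    (heb : ∀ n, EE Abar n = EE A n + QQ A (n+1) - QQ Abar n) (n : ℤ) :
    QQ A (n+1) ≤ EE Abar n := by
  rw [heb n]
  have := Qb_le A Abar hN hq n
  linarith

lemma notbad_Eb (hq : ∀ n, QQ Abar n = min (EE A n) (QQ A n + YY A hN n))
    (heb : ∀ n, EE Abar n = EE A n + QQ A (n+1) - QQ Abar n)
    (n : ℤ) (h : ¬ bad A hN n) : EE Abar n = QQ A (n+1) := by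
  rw [heb n, notbad_Qb A Abar hN hq n h]
  ring

lemma bad_per (n t : ℤ) : bad A hN (n + N*t) ↔ bad A hN n := by
  unfold bad
  rw [YY_per, dd_per]

end evol2

section casts
variable (hN : 2 ≤ N)

/-- even representative map -/
def c0 (n : ℤ) : ZMod (2*N) := ((2*n : ℤ) : ZMod (2*N))
/-- odd representative map -/
def c1 (n : ℤ) : ZMod (2*N) := ((2*n+1 : ℤ) : ZMod (2*N))

lemma c0_ne_c1 (hN0 : 0 < N) (u v : ℤ) : c0 (N := N) u ≠ c1 v := by
  unfold c0 c1
  rw [Ne, ZMod.intCast_eq_intCast_iff]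
  intro h
  have hd : ((2*N : ℕ) : ℤ) ∣ (2*v+1) - 2*u := Int.ModEq.dvd h
  obtain ⟨t, ht⟩ := hd
  have : (2:ℤ) * (v - u - (N:ℤ)*t) = -1 := by push_cast at ht; linarith [ht]
  omega

lemma c0_eq_iff (hN0 : 0 < N) (u v : ℤ) : c0 (N := N) u = c0 v ↔ (N:ℤ) ∣ v - u := by
  constructor
  · intro h
    unfold c0 at h
    rw [ZMod.intCast_eq_intCast_iff] at h
    have hd : ((2*N : ℕ) : ℤ) ∣ 2*v - 2*u := Int.ModEq.dvd h
    obtain ⟨t, ht⟩ := hd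
    refine ⟨t, ?_⟩
    push_cast at ht
    linarith
  · rintro ⟨t, ht⟩
    unfold c0
    rw [show (2*v : ℤ) = 2*u + 2*N*t by linarith]
    exact (cast_add_period (2*u) t).symm

lemma c1_eq_iff (hN0 : 0 < N) (u v : ℤ) : c1 (N := N) u = c1 v ↔ (N:ℤ) ∣ v - u := by
  constructor
  · intro h
    unfold c1 at h
    rw [ZMod.intCast_eq_intCast_iff] at h
    have hd : ((2*N : ℕ) : ℤ) ∣ (2*v+1) - (2*u+1) := Int.ModEq.dvd h
    obtain ⟨t, ht⟩ := hd
    refine ⟨t, ?_⟩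
    push_cast at ht
    linarith
  · rintro ⟨t, ht⟩
    unfold c1
    rw [show (2*v+1 : ℤ) = (2*u+1) + 2*N*t by linarith]
    exact (cast_add_period (2*u+1) t).symm

end casts

section casts2
variable {N : ℕ}

lemma c0_per (n t : ℤ) : c0 (N := N) (n + N*t) = c0 n := by
  unfold c0
  rw [show (2*(n + N*t) : ℤ) = 2*n + 2*N*t by ring]
  exact cast_add_period (2*n) t

lemma c1_per (n t : ℤ) : c1 (N := N) (n + N*t) = c1 n := by
  unfold c1
  rw [show (2*(n + N*t)+1 : ℤ) = (2*n+1) + 2*N*t by ring]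
  exact cast_add_period (2*n+1) t

lemma window_rep (hN0 : 0 < N) (c v : ℤ) :
    ∃ n t : ℤ, n = v + N*t ∧ c+1 ≤ n ∧ n ≤ c+N := by
  have hNz : (N:ℤ) ≠ 0 := by exact_mod_cast hN0.ne'
  have hNpos : (0:ℤ) < N := by exact_mod_cast hN0
  refine ⟨c + 1 + (v - c - 1) % N, -((v - c - 1) / N), ?_, ?_, ?_⟩
  · have h := Int.emod_add_mul_ediv (v - c - 1) N
    linarith [h]
  · have := Int.emod_nonneg (v - c - 1) hNz
    linarith
  · have := Int.emod_lt_of_pos (v - c - 1) hNpos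
    linarith

lemma window_inj (hN0 : 0 < N) (c u v : ℤ) (hu1 : c+1 ≤ u) (hu2 : u ≤ c+N)
    (hv1 : c+1 ≤ v) (hv2 : v ≤ c+N) (h : (N:ℤ) ∣ v - u) : u = v := by
  have : v - u = 0 := Int.eq_zero_of_abs_lt_dvd h (by rw [abs_lt]; omega)
  omega

lemma exists_rep (hN0 : 0 < N) (i : ZMod (2*N)) (c : ℤ) :
    ∃ n : ℤ, c+1 ≤ n ∧ n ≤ c+N ∧ (i = c0 n ∨ i = c1 n) := by
  haveI : NeZero (2*N) := ⟨by omega⟩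
  have hv : i = ((i.val : ℤ) : ZMod (2*N)) := by
    rw [Int.cast_natCast, ZMod.natCast_val, ZMod.cast_id]
  rcases Nat.even_or_odd i.val with ⟨q, hq⟩ | ⟨q, hq⟩
  · obtain ⟨n, t, hnt, h1, h2⟩ := window_rep hN0 c q
    refine ⟨n, h1, h2, Or.inl ?_⟩
    rw [hnt, c0_per, hv]
    unfold c0
    congr 1
    omega
  · obtain ⟨n, t, hnt, h1, h2⟩ := window_rep hN0 c q
    refine ⟨n, h1, h2, Or.inr ?_⟩
    rw [hnt, c1_per, hv]
    unfold c1
    congr 1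
    omega

end casts2

section tele
variable {N : ℕ}

lemma tele_Icc (Y : ℤ → ℝ) (s : ℤ) (M : ℕ) :
    ∑ n ∈ Finset.Icc s (s + M), (Y n - Y (n+1)) = Y s - Y (s + M + 1) := by
  induction M with
  | zero => simp
  | succ M ih =>
      have hsp : Finset.Icc s (s + (M+1 : ℕ)) = insert (s + M + 1) (Finset.Icc s (s + M)) := by
        ext x
        simp only [Finset.mem_Icc, Finset.mem_insert]
        push_cast
        omega
      rw [hsp, Finset.sum_insert (by simp only [Finset.mem_Icc]; push_cast; omega)]
      rw [ih]
      push_cast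
      ring_nf

lemma tele_ge (Y : ℤ → ℝ) (hY0 : ∀ n, 0 ≤ Y n) (B : Finset ℤ)
    (hend : ∀ n ∈ B, n + 1 ∈ B ∨ Y (n+1) = 0) :
    0 ≤ ∑ n ∈ B, (Y n - Y (n+1)) := by
  suffices H : ∀ (m : ℕ) (B : Finset ℤ), B.card ≤ m →
      (∀ n ∈ B, n + 1 ∈ B ∨ Y (n+1) = 0) → 0 ≤ ∑ n ∈ B, (Y n - Y (n+1)) by
    exact H B.card B le_rfl hend
  intro m
  induction m with
  | zero =>
      intro B hB _
      have : B = ∅ := Finset.card_eq_zero.mp (Nat.le_zero.mp hB)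
      simp [this]
  | succ m ih =>
      intro B hB hend
      rcases B.eq_empty_or_nonempty with rfl | hne
      · simp
      · set e := B.max' hne with he
        have hmem : e ∈ B := B.max'_mem hne
        have hetop : e + 1 ∉ B := fun hc => by
          have := B.le_max' _ hc; omega
        have hYe : Y (e+1) = 0 := by
          rcases hend e hmem with h | h
          · exact absurd h hetop
          · exact h
        -- find the maximal block [s, e] inside B
        have hP0 : Finset.Icc (e - (0:ℕ)) e ⊆ B := by
          intro x hx
          simp only [Finset.mem_Icc] at hx
          have : x = e := by push_cast at hx; omega
          rwa [this]
        set P : ℕ → Prop := fun k => Finset.Icc (e - (k:ℤ)) e ⊆ B with hPdef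
        have hPnot : ¬ P B.card := by
          intro hc
          have hcard := Finset.card_le_card hc
          rw [Int.card_Icc] at hcard
          omega
        classical
        have hex : ∃ k, ¬ P k := ⟨B.card, hPnot⟩
        set k1 := Nat.find hex with hk1
        have hk1pos : 0 < k1 := by
          rcases Nat.eq_zero_or_pos k1 with h | h
          · exfalso
            have := Nat.find_spec hex
            rw [← hk1, h] at this
            exact this hP0
          · exact h
        set k0 := k1 - 1 with hk0
        have hPk0 : P k0 := by
          by_contra hc
          have := Nat.find_min' hex hc
          omega
        have hPk0succ : ¬ P (k0 + 1) := by
          have : k0 + 1 = k1 := by omega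
          rw [this]
          exact Nat.find_spec hex
        set s := e - (k0:ℤ) with hs
        have hIcc : Finset.Icc s e ⊆ B := hPk0
        have hsm1 : s - 1 ∉ B := by
          intro hc
          apply hPk0succ
          intro x hx
          simp only [Finset.mem_Icc] at hx
          rcases eq_or_lt_of_le hx.1 with h | h
          · rw [← h]
            convert hc using 1
            push_cast
            omega
          · apply hIcc
            simp only [Finset.mem_Icc]
            constructor
            · push_cast at h ⊢; omega
            · exact hx.2
        set B' := B \ Finset.Icc s e with hB'
        have hsum : ∑ n ∈ B, (Y n - Y (n+1))
            = ∑ n ∈ B', (Y n - Y (n+1)) + ∑ n ∈ Finset.Icc s e, (Y n - Y (n+1)) :=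
          (Finset.sum_sdiff hIcc).symm
        have htel : ∑ n ∈ Finset.Icc s e, (Y n - Y (n+1)) = Y s - Y (e+1) := by
          have : e = s + (k0:ℕ) := by omega
          rw [this, tele_Icc]
        have hcard' : B'.card ≤ m := by
          have h1 : B'.card < B.card := by
            apply Finset.card_lt_card
            constructor
            · exact Finset.sdiff_subset
            · intro hc
              have := hc (hIcc (by simp only [Finset.mem_Icc]; omega : e ∈ Finset.Icc s e))
              rw [hB'] at this
              simp only [Finset.mem_sdiff, Finset.mem_Icc] at this
              exact this.2 ⟨by omega, le_rfl⟩
          omega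
        have hend' : ∀ n ∈ B', n + 1 ∈ B' ∨ Y (n+1) = 0 := by
          intro n hn
          rw [hB', Finset.mem_sdiff] at hn
          rcases hend n hn.1 with h | h
          · left
            rw [hB', Finset.mem_sdiff]
            refine ⟨h, ?_⟩
            intro hc
            simp only [Finset.mem_Icc] at hc
            rcases lt_or_ge n s with hlt | hge
            · have hns : s - 1 = n := by omega
              exact hsm1 (hns ▸ hn.1)
            · exact hn.2 (by simp only [Finset.mem_Icc]; omega)
          · right; exact h
        rw [hsum, htel, hYe]
        have := ih B' hcard' hend'
        have := hY0 s
        linarith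

end tele

section tele2
variable {N : ℕ}

lemma tele_ge' (Y : ℤ → ℝ) (hY0 : ∀ n, 0 ≤ Y n) (B : Finset ℤ)
    (hstart : ∀ n ∈ B, n - 1 ∈ B ∨ Y n = 0) :
    0 ≤ ∑ n ∈ B, (Y (n+1) - Y n) := by
  classical
  set Z : ℤ → ℝ := fun m => Y (-m + 1) with hZ
  have h1 : ∑ n ∈ B, (Y (n+1) - Y n) = ∑ m ∈ B.image (fun n => -n), (Z m - Z (m+1)) := by
    rw [Finset.sum_image (by intros a _ b _ h; simp only at h; omega)]
    apply Finset.sum_congr rfl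
    intro n _
    simp only [hZ]
    congr 2 <;> ring
  rw [h1]
  apply tele_ge Z (fun n => hY0 _)
  intro m hm
  simp only [Finset.mem_image] at hm
  obtain ⟨n, hn, rfl⟩ := hm
  rcases hstart n hn with h | h
  · left
    exact Finset.mem_image.mpr ⟨n - 1, h, by ring⟩
  · right
    show Y (-(-n+1)+1) = 0
    rw [show (-(-n+1)+1 : ℤ) = n by ring]
    exact h

lemma c0_add_one (n : ℤ) : c0 (N:=N) n + 1 = c1 n := by
  unfold c0 c1
  push_cast
  ring

lemma c1_add_one (n : ℤ) : c1 (N:=N) n + 1 = c0 (n+1) := by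
  unfold c0 c1
  push_cast
  ring

lemma sum_tele_window (hN : 2 ≤ N) (Y : ℤ → ℝ) (hper : ∀ n : ℤ, Y (n + N) = Y n) (c : ℤ) :
    ∑ n ∈ Finset.Icc (c+1) (c+N), (Y n - Y (n+1)) = 0 := by
  have h : Finset.Icc (c+1) (c+N) = Finset.Icc (c+1) ((c+1) + ((N-1 : ℕ) : ℤ)) := by
    congr 1
    push_cast
    omega
  rw [h, tele_Icc]
  rw [show (c+1) + ((N-1:ℕ):ℤ) + 1 = (c+1) + N by push_cast; omega, hper]
  ring

lemma window_c0_injOn (hN0 : 0 < N) (c : ℤ) :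
    ∀ u ∈ Finset.Icc (c+1) (c+N), ∀ v ∈ Finset.Icc (c+1) (c+N),
      c0 (N:=N) u = c0 v → u = v := by
  intro u hu v hv h
  simp only [Finset.mem_Icc] at hu hv
  exact window_inj hN0 c u v hu.1 hu.2 hv.1 hv.2 ((c0_eq_iff hN0 u v).mp h)

lemma window_c1_injOn (hN0 : 0 < N) (c : ℤ) :
    ∀ u ∈ Finset.Icc (c+1) (c+N), ∀ v ∈ Finset.Icc (c+1) (c+N),
      c1 (N:=N) u = c1 v → u = v := by
  intro u hu v hv h
  simp only [Finset.mem_Icc] at hu hv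
  exact window_inj hN0 c u v hu.1 hu.2 hv.1 hv.2 ((c1_eq_iff hN0 u v).mp h)

end tele2

section allEven
variable {N : ℕ}

lemma allEven_S (hN : 2 ≤ N) (S : Finset (ZMod (2*N)))
    (hS : ∀ i ∈ S, i + 1 ∉ S) (hall : ∀ n : ℤ, c0 (N:=N) n ∈ S) :
    S = (Finset.Icc ((0:ℤ)+1) (0+N)).image (c0 (N:=N)) := by
  have hN0 : 0 < N := by omega
  ext i
  constructor
  · intro hi
    obtain ⟨n, h1, h2, hrep⟩ := exists_rep hN0 i 0
    rcases hrep with h | h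
    · exact Finset.mem_image.mpr ⟨n, Finset.mem_Icc.mpr ⟨h1, h2⟩, h.symm⟩
    · exfalso
      apply hS i hi
      rw [h, c1_add_one]
      exact hall (n+1)
  · intro hi
    obtain ⟨n, _, rfl⟩ := Finset.mem_image.mp hi
    exact hall n

lemma allEven_sum (hN : 2 ≤ N) (A Abar : ZMod (2*N) → ℝ)
    (hq : ∀ n, QQ Abar n = min (EE A n) (QQ A n + YY A hN n))
    (hD : 0 < DD A)
    (S : Finset (ZMod (2*N)))
    (hS : ∀ i ∈ S, i + 1 ∉ S) (hall : ∀ n : ℤ, c0 (N:=N) n ∈ S) :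
    ∑ i ∈ S, Abar i = ∑ i ∈ S, A i := by
  have hN0 : 0 < N := by omega
  rw [allEven_S hN S hS hall]
  rw [Finset.sum_image (window_c0_injOn hN0 0), Finset.sum_image (window_c0_injOn hN0 0)]
  have hpt : ∀ n : ℤ, Abar (c0 n) = A (c0 n) + (YY A hN n - YY A hN (n+1)) := by
    intro n
    have := Qb_id A Abar hN hq hD n
    show QQ Abar n = QQ A n + _
    rw [this]
    ring
  rw [Finset.sum_congr rfl (fun n _ => hpt n), Finset.sum_add_distrib]
  have hper : ∀ n : ℤ, YY A hN (n + N) = YY A hN n := by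
    intro n
    have := YY_per A hN n 1
    rwa [mul_one] at this
  rw [sum_tele_window hN _ hper 0, add_zero]

end allEven

section mainB
variable {N : ℕ}

lemma dirB (hN : 2 ≤ N) (A Abar : ZMod (2*N) → ℝ)
    (hq : ∀ n, QQ Abar n = min (EE A n) (QQ A n + YY A hN n))
    (heb : ∀ n, EE Abar n = EE A n + QQ A (n+1) - QQ Abar n)
    (hD : 0 < DD A)
    (S : Finset (ZMod (2*N))) (hS : ∀ i ∈ S, i + 1 ∉ S) :
    ∃ T : Finset (ZMod (2*N)), T.card = S.card ∧ (∀ i ∈ T, i + 1 ∉ T) ∧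
      ∑ i ∈ T, A i ≤ ∑ i ∈ S, Abar i := by
  classical
  have hN0 : 0 < N := by omega
  by_cases hall : ∀ n : ℤ, c0 (N:=N) n ∈ S
  · exact ⟨S, rfl, hS, (allEven_sum hN A Abar hq hD S hS hall).ge⟩
  push_neg at hall
  obtain ⟨p, hp⟩ := hall
  set W := Finset.Icc (p+1) (p+(N:ℤ)) with hW
  set stayB : ℤ → Prop := fun n => ∃ l : ℕ, bad A hN (n + l) ∧
      ∀ t : ℕ, 1 ≤ t → t ≤ l → c0 (N:=N) (n + t) ∈ S with hstayB
  set Bev := W.filter (fun n => c0 (N:=N) n ∈ S) with hBev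
  set Bst := Bev.filter stayB with hBst
  set Bsh := Bev.filter (fun n => ¬ stayB n) with hBsh
  set Bod := W.filter (fun n => c1 (N:=N) n ∈ S) with hBod
  have hBevW : Bev ⊆ W := Finset.filter_subset _ _
  have hBstW : Bst ⊆ W := fun x hx => hBevW (Finset.filter_subset _ _ hx)
  have hBshW : Bsh ⊆ W := fun x hx => hBevW (Finset.filter_subset _ _ hx)
  have hBodW : Bod ⊆ W := Finset.filter_subset _ _
  have memW : ∀ {x : ℤ}, x ∈ W → p+1 ≤ x ∧ x ≤ p+N := by
    intro x hx; rwa [hW, Finset.mem_Icc] at hx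
  -- transport lemmas
  have stay_shift : ∀ n t : ℤ, stayB n → stayB (n + N*t) := by
    rintro n t ⟨l, hb, hm⟩
    refine ⟨l, ?_, ?_⟩
    · rw [show (n + N*t + l : ℤ) = (n + l) + N*t by ring]
      rwa [bad_per]
    · intro t' h1 h2
      rw [show (n + N*t + t' : ℤ) = (n + t') + N*t by ring, c0_per]
      exact hm t' h1 h2
  have stay_per : ∀ n t : ℤ, stayB (n + N*t) ↔ stayB n := by
    intro n t
    constructor
    · intro h
      have := stay_shift (n + N*t) (-t) h
      rwa [show (n + N*t + N*(-t) : ℤ) = n by ring] at this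
    · exact stay_shift n t
  have shiftgood : ∀ n : ℤ, ¬ stayB n → ¬ bad A hN n := by
    intro n hns hb
    exact hns ⟨0, by simpa using hb,
      fun t h1 h2 => absurd (h1.trans h2) (by norm_num)⟩
  have stayclose : ∀ n : ℤ, c0 (N:=N) (n+1) ∈ S → stayB (n+1) → stayB n := by
    rintro n hmem1 ⟨l, hb, hm⟩
    refine ⟨l + 1, ?_, ?_⟩
    · rw [show (n + ((l+1 : ℕ)) : ℤ) = (n + 1) + l by push_cast; ring]
      exact hb
    · intro t h1 h2
      rcases Nat.eq_or_lt_of_le h1 with h | h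
      · rw [show ((n:ℤ) + (t:ℕ) : ℤ) = n + 1 by omega]
        exact hmem1
      · have := hm (t-1) (by omega) (by omega)
        rwa [show ((n+1) + ((t-1 : ℕ) : ℤ) : ℤ) = n + t by push_cast; omega] at this
  have hendB : ∀ n ∈ Bst, n + 1 ∈ Bst ∨ YY A hN (n+1) = 0 := by
    intro n hn
    simp only [hBst, hBev, Finset.mem_filter] at hn
    obtain ⟨⟨hnW, hnS⟩, hstay⟩ := hn
    obtain ⟨l, hb, hm⟩ := hstay
    cases l with
    | zero =>
        right
        apply bad_Y0 A hN hD
        simpa using hb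
    | succ l' =>
        left
        have hmem1 : c0 (N:=N) (n+1) ∈ S := by
          have := hm 1 le_rfl (by omega)
          rwa [show (n + ((1:ℕ):ℤ) : ℤ) = n + 1 by push_cast; ring] at this
        have hstay1 : stayB (n+1) := by
          refine ⟨l', ?_, ?_⟩
          · rw [show ((n+1) + ((l':ℕ):ℤ) : ℤ) = n + ((l'+1 : ℕ) : ℤ) by push_cast; ring]
            exact hb
          · intro t h1 h2
            have := hm (t+1) (by omega) (by omega)
            rwa [show (n + (((t+1) : ℕ) : ℤ) : ℤ) = (n+1) + t by push_cast; ring] at this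
        have hnW' : n + 1 ∈ W := by
          have hb2 := memW hnW
          rw [hW, Finset.mem_Icc]
          rcases eq_or_lt_of_le hb2.2 with heq | hlt
          · exfalso
            apply hp
            have e : c0 (N:=N) p = c0 (N:=N) n := by
              rw [show (n : ℤ) = p + N*1 by omega, c0_per]
            rw [e]
            exact hnS
          · omega
        simp only [hBst, hBev, Finset.mem_filter]
        exact ⟨⟨hnW', hmem1⟩, hstay1⟩
  -- decomposition of S
  have injc0 : ∀ u ∈ W, ∀ v ∈ W, c0 (N:=N) u = c0 v → u = v := by
    intro u hu v hv h
    exact window_inj hN0 p u v (memW hu).1 (memW hu).2 (memW hv).1 (memW hv).2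
      ((c0_eq_iff hN0 u v).mp h)
  have injc1 : ∀ u ∈ W, ∀ v ∈ W, c1 (N:=N) u = c1 v → u = v := by
    intro u hu v hv h
    exact window_inj hN0 p u v (memW hu).1 (memW hu).2 (memW hv).1 (memW hv).2
      ((c1_eq_iff hN0 u v).mp h)
  have injc0s : ∀ u ∈ W, ∀ v ∈ W, c0 (N:=N) (u+1) = c0 (v+1) → u = v := by
    intro u hu v hv h
    have hd := (c0_eq_iff hN0 (u+1) (v+1)).mp h
    have hd' : (N:ℤ) ∣ v - u := by
      obtain ⟨t, ht⟩ := hd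
      exact ⟨t, by omega⟩
    exact window_inj hN0 p u v (memW hu).1 (memW hu).2 (memW hv).1 (memW hv).2 hd'
  have hdecomp : S = Bev.image (c0 (N:=N)) ∪ Bod.image (c1 (N:=N)) := by
    ext i
    simp only [Finset.mem_union, Finset.mem_image]
    constructor
    · intro hi
      obtain ⟨n, h1, h2, hrep⟩ := exists_rep hN0 i p
      rcases hrep with h | h
      · left
        refine ⟨n, ?_, h.symm⟩
        simp only [hBev, hW, Finset.mem_filter, Finset.mem_Icc]
        exact ⟨⟨h1, h2⟩, h ▸ hi⟩
      · right
        refine ⟨n, ?_, h.symm⟩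
        simp only [hBod, hW, Finset.mem_filter, Finset.mem_Icc]
        exact ⟨⟨h1, h2⟩, h ▸ hi⟩
    · rintro (⟨n, hn, rfl⟩ | ⟨n, hn, rfl⟩)
      · exact (Finset.mem_filter.mp hn).2
      · exact (Finset.mem_filter.mp hn).2
  have hdisj0 : Disjoint (Bev.image (c0 (N:=N))) (Bod.image (c1 (N:=N))) := by
    rw [Finset.disjoint_left]
    rintro x hx hx'
    obtain ⟨u, hu, rfl⟩ := Finset.mem_image.mp hx
    obtain ⟨v, hv, hveq⟩ := Finset.mem_image.mp hx'
    exact c0_ne_c1 hN0 u v hveq.symm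
  have hmemS_ev : ∀ {n : ℤ}, n ∈ Bev → c0 (N:=N) n ∈ S := fun hn =>
    (Finset.mem_filter.mp hn).2
  have hmemS_od : ∀ {n : ℤ}, n ∈ Bod → c1 (N:=N) n ∈ S := fun hn =>
    (Finset.mem_filter.mp hn).2
  -- the new set T
  set T := (Bst.image (c0 (N:=N)) ∪ Bsh.image (c1 (N:=N)))
      ∪ Bod.image (fun n => c0 (N:=N) (n+1)) with hT
  have hd1 : Disjoint (Bst.image (c0 (N:=N))) (Bsh.image (c1 (N:=N))) := by
    rw [Finset.disjoint_left]
    rintro x hx hx'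
    obtain ⟨u, hu, rfl⟩ := Finset.mem_image.mp hx
    obtain ⟨v, hv, hveq⟩ := Finset.mem_image.mp hx'
    exact c0_ne_c1 hN0 u v hveq.symm
  have hd2 : Disjoint (Bst.image (c0 (N:=N)) ∪ Bsh.image (c1 (N:=N)))
      (Bod.image (fun n => c0 (N:=N) (n+1))) := by
    rw [Finset.disjoint_left]
    rintro x hx hx'
    obtain ⟨v, hv, hveq⟩ := Finset.mem_image.mp hx'
    rcases Finset.mem_union.mp hx with hx0 | hx0
    · obtain ⟨u, hu, rfl⟩ := Finset.mem_image.mp hx0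
      -- c0 u = c0 (v+1), u ∈ Bst, v ∈ Bod
      have h1 : c0 (N:=N) (v+1) ∈ S := by
        rw [hveq]
        exact hmemS_ev (Finset.filter_subset _ _ hu)
      apply hS (c1 (N:=N) v) (hmemS_od hv)
      rwa [c1_add_one]
    · obtain ⟨u, hu, rfl⟩ := Finset.mem_image.mp hx0
      exact c0_ne_c1 hN0 (v+1) u hveq
  have hinjBev : Set.InjOn (c0 (N:=N)) ↑Bev := fun u hu v hv h =>
    injc0 u (hBevW hu) v (hBevW hv) h
  have hinjBst : Set.InjOn (c0 (N:=N)) ↑Bst := fun u hu v hv h =>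
    injc0 u (hBstW hu) v (hBstW hv) h
  have hinjBsh : Set.InjOn (c1 (N:=N)) ↑Bsh := fun u hu v hv h =>
    injc1 u (hBshW hu) v (hBshW hv) h
  have hinjBod : Set.InjOn (c1 (N:=N)) ↑Bod := fun u hu v hv h =>
    injc1 u (hBodW hu) v (hBodW hv) h
  have hinjBods : Set.InjOn (fun n => c0 (N:=N) (n+1)) ↑Bod := fun u hu v hv h =>
    injc0s u (hBodW hu) v (hBodW hv) h
  have hcardS : S.card = Bev.card + Bod.card := by
    rw [hdecomp, Finset.card_union_of_disjoint hdisj0,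
        Finset.card_image_of_injOn hinjBev, Finset.card_image_of_injOn hinjBod]
  have hcardT : T.card = S.card := by
    rw [hT, Finset.card_union_of_disjoint hd2, Finset.card_union_of_disjoint hd1,
        Finset.card_image_of_injOn hinjBst, Finset.card_image_of_injOn hinjBsh,
        Finset.card_image_of_injOn hinjBods, hcardS]
    have := Finset.card_filter_add_card_filter_not (s := Bev) (p := stayB)
    rw [← hBst, ← hBsh] at this
    omega
  -- sparseness of T
  have hTsparse : ∀ x ∈ T, x + 1 ∉ T := by
    intro x hx hx1
    rw [hT] at hx hx1
    rcases Finset.mem_union.mp hx with hx' | hx'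
    · rcases Finset.mem_union.mp hx' with hx'' | hx''
      · -- x = c0 u, u ∈ Bst
        obtain ⟨u, hu, rfl⟩ := Finset.mem_image.mp hx''
        rw [c0_add_one] at hx1
        rcases Finset.mem_union.mp hx1 with hy | hy
        · rcases Finset.mem_union.mp hy with hy' | hy'
          · obtain ⟨v, hv, hveq⟩ := Finset.mem_image.mp hy'
            exact c0_ne_c1 hN0 v u hveq
          · obtain ⟨v, hv, hveq⟩ := Finset.mem_image.mp hy'
            have := injc1 v (hBshW hv) u (hBstW hu) hveq
            subst this
            exact (Finset.mem_filter.mp hv).2 (Finset.mem_filter.mp hu).2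
        · obtain ⟨v, hv, hveq⟩ := Finset.mem_image.mp hy
          exact c0_ne_c1 hN0 (v+1) u hveq
      · -- x = c1 u, u ∈ Bsh
        obtain ⟨u, hu, rfl⟩ := Finset.mem_image.mp hx''
        rw [c1_add_one] at hx1
        rcases Finset.mem_union.mp hx1 with hy | hy
        · rcases Finset.mem_union.mp hy with hy' | hy'
          · -- c0 v = c0 (u+1), v ∈ Bst : contradiction with ¬stayB u
            obtain ⟨v, hv, hveq⟩ := Finset.mem_image.mp hy'
            have hd := (c0_eq_iff hN0 v (u+1)).mp hveq
            obtain ⟨t, ht⟩ := hd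
            have hvS : c0 (N:=N) v ∈ S := hmemS_ev (Finset.filter_subset _ _ hv)
            have hstayv : stayB v := (Finset.mem_filter.mp hv).2
            have hmem1 : c0 (N:=N) (u+1) ∈ S := by
              rw [show (u+1 : ℤ) = v + N*t by omega, c0_per]
              exact hvS
            have hstay1 : stayB (u+1) := by
              rw [show (u+1 : ℤ) = v + N*t by omega]
              exact (stay_per v t).mpr hstayv
            exact (Finset.mem_filter.mp hu).2 (stayclose u hmem1 hstay1)
          · obtain ⟨v, hv, hveq⟩ := Finset.mem_image.mp hy'
            exact c0_ne_c1 hN0 (u+1) v hveq.symm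
          -- c1 v = c0 (u+1): parity
        · -- c0 (v+1) = c0 (u+1), v ∈ Bod
          obtain ⟨v, hv, hveq⟩ := Finset.mem_image.mp hy
          have hd := (c0_eq_iff hN0 (v+1) (u+1)).mp hveq
          obtain ⟨t, ht⟩ := hd
          have hvS : c1 (N:=N) v ∈ S := hmemS_od hv
          have huS : c0 (N:=N) u ∈ S := hmemS_ev (Finset.filter_subset _ _ hu)
          have h1 : c1 (N:=N) u ∈ S := by
            rw [show (u : ℤ) = v + N*t by omega, c1_per]
            exact hvS
          apply hS (c0 (N:=N) u) huS
          rwa [c0_add_one]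
    · -- x = c0 (u+1), u ∈ Bod
      obtain ⟨u, hu, rfl⟩ := Finset.mem_image.mp hx'
      rw [c0_add_one] at hx1
      rcases Finset.mem_union.mp hx1 with hy | hy
      · rcases Finset.mem_union.mp hy with hy' | hy'
        · obtain ⟨v, hv, hveq⟩ := Finset.mem_image.mp hy'
          exact c0_ne_c1 hN0 v (u+1) hveq
        · -- c1 v = c1 (u+1), v ∈ Bsh
          obtain ⟨v, hv, hveq⟩ := Finset.mem_image.mp hy'
          have hd := (c1_eq_iff hN0 v (u+1)).mp hveq
          obtain ⟨t, ht⟩ := hd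
          have hvS : c0 (N:=N) v ∈ S := hmemS_ev (Finset.filter_subset _ _ hv)
          have h1 : c0 (N:=N) (u+1) ∈ S := by
            rw [show (u+1 : ℤ) = v + N*t by omega, c0_per]
            exact hvS
          apply hS (c1 (N:=N) u) (hmemS_od hu)
          rwa [c1_add_one]
      · obtain ⟨v, hv, hveq⟩ := Finset.mem_image.mp hy
        exact c0_ne_c1 hN0 (v+1) (u+1) hveq
  -- the sum inequality
  have hsum_S : ∑ i ∈ S, Abar i
      = ∑ n ∈ Bst, QQ Abar n + ∑ n ∈ Bsh, QQ Abar n + ∑ n ∈ Bod, EE Abar n := by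
    rw [hdecomp, Finset.sum_union hdisj0, Finset.sum_image hinjBev,
        Finset.sum_image hinjBod]
    have := Finset.sum_filter_add_sum_filter_not Bev stayB (fun n => Abar (c0 (N:=N) n))
    rw [← hBst, ← hBsh] at this
    rw [← this]
    rfl
  have hsum_T : ∑ i ∈ T, A i
      = ∑ n ∈ Bst, QQ A n + ∑ n ∈ Bsh, EE A n + ∑ n ∈ Bod, QQ A (n+1) := by
    rw [hT, Finset.sum_union hd2, Finset.sum_union hd1, Finset.sum_image hinjBst,
        Finset.sum_image hinjBsh, Finset.sum_image hinjBods]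
    rfl
  have hBsh_eq : ∑ n ∈ Bsh, QQ Abar n = ∑ n ∈ Bsh, EE A n := by
    apply Finset.sum_congr rfl
    intro n hn
    exact notbad_Qb A Abar hN hq n (shiftgood n (Finset.mem_filter.mp hn).2)
  have hBod_le : ∑ n ∈ Bod, QQ A (n+1) ≤ ∑ n ∈ Bod, EE Abar n :=
    Finset.sum_le_sum (fun n _ => Eb_ge A Abar hN hq heb n)
  have hBst_le : ∑ n ∈ Bst, QQ A n ≤ ∑ n ∈ Bst, QQ Abar n := by
    have h1 : ∑ n ∈ Bst, QQ Abar n - ∑ n ∈ Bst, QQ A n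
        = ∑ n ∈ Bst, (YY A hN n - YY A hN (n+1)) := by
      rw [← Finset.sum_sub_distrib]
      apply Finset.sum_congr rfl
      intro n _
      rw [Qb_id A Abar hN hq hD n]
      ring
    have h2 := tele_ge (YY A hN) (YY_nonneg A hN) Bst hendB
    linarith
  refine ⟨T, hcardT, hTsparse, ?_⟩
  rw [hsum_S, hsum_T]
  linarith
end mainB

section mainA
variable {N : ℕ}

lemma dirA (hN : 2 ≤ N) (A Abar : ZMod (2*N) → ℝ)
    (hq : ∀ n, QQ Abar n = min (EE A n) (QQ A n + YY A hN n))
    (heb : ∀ n, EE Abar n = EE A n + QQ A (n+1) - QQ Abar n)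
    (hD : 0 < DD A)
    (S : Finset (ZMod (2*N))) (hS : ∀ i ∈ S, i + 1 ∉ S) :
    ∃ T : Finset (ZMod (2*N)), T.card = S.card ∧ (∀ i ∈ T, i + 1 ∉ T) ∧
      ∑ i ∈ T, Abar i ≤ ∑ i ∈ S, A i := by
  classical
  have hN0 : 0 < N := by omega
  by_cases hall : ∀ n : ℤ, c0 (N:=N) n ∈ S
  · exact ⟨S, rfl, hS, (allEven_sum hN A Abar hq hD S hS hall).le⟩
  push_neg at hall
  obtain ⟨p, hp⟩ := hall
  set W := Finset.Icc (p+1) (p+(N:ℤ)) with hW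
  set stayA : ℤ → Prop := fun n => ∃ l : ℕ, bad A hN (n - 1 - l) ∧
      ∀ t : ℕ, 1 ≤ t → t ≤ l → c0 (N:=N) (n - t) ∈ S with hstayA
  set Bev := W.filter (fun n => c0 (N:=N) n ∈ S) with hBev
  set Bst := Bev.filter stayA with hBst
  set Bsh := Bev.filter (fun n => ¬ stayA n) with hBsh
  set Bod := W.filter (fun n => c1 (N:=N) n ∈ S) with hBod
  have hBevW : Bev ⊆ W := Finset.filter_subset _ _
  have hBstW : Bst ⊆ W := fun x hx => hBevW (Finset.filter_subset _ _ hx)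
  have hBshW : Bsh ⊆ W := fun x hx => hBevW (Finset.filter_subset _ _ hx)
  have hBodW : Bod ⊆ W := Finset.filter_subset _ _
  have memW : ∀ {x : ℤ}, x ∈ W → p+1 ≤ x ∧ x ≤ p+N := by
    intro x hx; rwa [hW, Finset.mem_Icc] at hx
  have stay_shift : ∀ n t : ℤ, stayA n → stayA (n + N*t) := by
    rintro n t ⟨l, hb, hm⟩
    refine ⟨l, ?_, ?_⟩
    · rw [show (n + N*t - 1 - l : ℤ) = (n - 1 - l) + N*t by ring]
      rwa [bad_per]
    · intro t' h1 h2
      rw [show (n + N*t - t' : ℤ) = (n - t') + N*t by ring, c0_per]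
      exact hm t' h1 h2
  have stay_per : ∀ n t : ℤ, stayA (n + N*t) ↔ stayA n := by
    intro n t
    constructor
    · intro h
      have := stay_shift (n + N*t) (-t) h
      rwa [show (n + N*t + N*(-t) : ℤ) = n by ring] at this
    · exact stay_shift n t
  have shiftgood : ∀ n : ℤ, ¬ stayA n → ¬ bad A hN (n-1) := by
    intro n hns hb
    refine hns ⟨0, ?_, fun t h1 h2 => absurd (h1.trans h2) (by norm_num)⟩
    rw [show (n - 1 - ((0:ℕ):ℤ) : ℤ) = n - 1 by push_cast; ring]
    exact hb
  have stayclose : ∀ n : ℤ, c0 (N:=N) n ∈ S → stayA n → stayA (n+1) := by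
    rintro n hmem1 ⟨l, hb, hm⟩
    refine ⟨l + 1, ?_, ?_⟩
    · rw [show (n + 1 - 1 - ((l+1 : ℕ):ℤ) : ℤ) = n - 1 - l by push_cast; ring]
      exact hb
    · intro t h1 h2
      rcases Nat.eq_or_lt_of_le h1 with h | h
      · rw [show ((n + 1 : ℤ) - (t:ℕ) : ℤ) = n by omega]
        exact hmem1
      · have := hm (t-1) (by omega) (by omega)
        rwa [show ((n : ℤ) - ((t-1 : ℕ) : ℤ) : ℤ) = n + 1 - t by push_cast; omega] at this
  have hstartA : ∀ n ∈ Bst, n - 1 ∈ Bst ∨ YY A hN n = 0 := by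
    intro n hn
    simp only [hBst, hBev, Finset.mem_filter] at hn
    obtain ⟨⟨hnW, hnS⟩, hstay⟩ := hn
    obtain ⟨l, hb, hm⟩ := hstay
    cases l with
    | zero =>
        right
        have := bad_Y0 A hN hD (n-1) (by
          rw [show (n - 1 : ℤ) = n - 1 - ((0:ℕ):ℤ) by push_cast; ring]
          exact hb)
        rwa [show (n - 1 + 1 : ℤ) = n by ring] at this
    | succ l' =>
        left
        have hmem1 : c0 (N:=N) (n-1) ∈ S := by
          have := hm 1 le_rfl (by omega)
          rwa [show ((n:ℤ) - ((1:ℕ):ℤ) : ℤ) = n - 1 by push_cast; ring] at this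
        have hstay1 : stayA (n-1) := by
          refine ⟨l', ?_, ?_⟩
          · rw [show ((n-1) - 1 - ((l':ℕ):ℤ) : ℤ) = n - 1 - ((l'+1 : ℕ) : ℤ) by push_cast; ring]
            exact hb
          · intro t h1 h2
            have := hm (t+1) (by omega) (by omega)
            rwa [show ((n:ℤ) - (((t+1) : ℕ) : ℤ) : ℤ) = (n-1) - t by push_cast; ring] at this
        have hnW' : n - 1 ∈ W := by
          have hb2 := memW hnW
          rw [hW, Finset.mem_Icc]
          rcases eq_or_lt_of_le hb2.1 with heq | hlt
          · exfalso
            apply hp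
            have e : c0 (N:=N) p = c0 (N:=N) (n-1) := by
              rw [show (n - 1 : ℤ) = p + N*0 by omega, c0_per]
            rw [e]
            exact hmem1
          · omega
        simp only [hBst, hBev, Finset.mem_filter]
        exact ⟨⟨hnW', hmem1⟩, hstay1⟩
  have injc0 : ∀ u ∈ W, ∀ v ∈ W, c0 (N:=N) u = c0 v → u = v := by
    intro u hu v hv h
    exact window_inj hN0 p u v (memW hu).1 (memW hu).2 (memW hv).1 (memW hv).2
      ((c0_eq_iff hN0 u v).mp h)
  have injc1 : ∀ u ∈ W, ∀ v ∈ W, c1 (N:=N) u = c1 v → u = v := by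
    intro u hu v hv h
    exact window_inj hN0 p u v (memW hu).1 (memW hu).2 (memW hv).1 (memW hv).2
      ((c1_eq_iff hN0 u v).mp h)
  have injc1s : ∀ u ∈ W, ∀ v ∈ W, c1 (N:=N) (u-1) = c1 (v-1) → u = v := by
    intro u hu v hv h
    have hd := (c1_eq_iff hN0 (u-1) (v-1)).mp h
    have hd' : (N:ℤ) ∣ v - u := by
      obtain ⟨t, ht⟩ := hd
      exact ⟨t, by omega⟩
    exact window_inj hN0 p u v (memW hu).1 (memW hu).2 (memW hv).1 (memW hv).2 hd'
  have hdecomp : S = Bev.image (c0 (N:=N)) ∪ Bod.image (c1 (N:=N)) := by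
    ext i
    simp only [Finset.mem_union, Finset.mem_image]
    constructor
    · intro hi
      obtain ⟨n, h1, h2, hrep⟩ := exists_rep hN0 i p
      rcases hrep with h | h
      · left
        refine ⟨n, ?_, h.symm⟩
        simp only [hBev, hW, Finset.mem_filter, Finset.mem_Icc]
        exact ⟨⟨h1, h2⟩, h ▸ hi⟩
      · right
        refine ⟨n, ?_, h.symm⟩
        simp only [hBod, hW, Finset.mem_filter, Finset.mem_Icc]
        exact ⟨⟨h1, h2⟩, h ▸ hi⟩
    · rintro (⟨n, hn, rfl⟩ | ⟨n, hn, rfl⟩)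
      · exact (Finset.mem_filter.mp hn).2
      · exact (Finset.mem_filter.mp hn).2
  have hdisj0 : Disjoint (Bev.image (c0 (N:=N))) (Bod.image (c1 (N:=N))) := by
    rw [Finset.disjoint_left]
    rintro x hx hx'
    obtain ⟨u, hu, rfl⟩ := Finset.mem_image.mp hx
    obtain ⟨v, hv, hveq⟩ := Finset.mem_image.mp hx'
    exact c0_ne_c1 hN0 u v hveq.symm
  have hmemS_ev : ∀ {n : ℤ}, n ∈ Bev → c0 (N:=N) n ∈ S := fun hn =>
    (Finset.mem_filter.mp hn).2
  have hmemS_od : ∀ {n : ℤ}, n ∈ Bod → c1 (N:=N) n ∈ S := fun hn =>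
    (Finset.mem_filter.mp hn).2
  set T := (Bst.image (c0 (N:=N)) ∪ Bsh.image (fun n => c1 (N:=N) (n-1)))
      ∪ Bod.image (c0 (N:=N)) with hT
  have hd1 : Disjoint (Bst.image (c0 (N:=N))) (Bsh.image (fun n => c1 (N:=N) (n-1))) := by
    rw [Finset.disjoint_left]
    rintro x hx hx'
    obtain ⟨u, hu, rfl⟩ := Finset.mem_image.mp hx
    obtain ⟨v, hv, hveq⟩ := Finset.mem_image.mp hx'
    exact c0_ne_c1 hN0 u (v-1) hveq.symm
  have hd2 : Disjoint (Bst.image (c0 (N:=N)) ∪ Bsh.image (fun n => c1 (N:=N) (n-1)))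
      (Bod.image (c0 (N:=N))) := by
    rw [Finset.disjoint_left]
    rintro x hx hx'
    obtain ⟨v, hv, hveq⟩ := Finset.mem_image.mp hx'
    rcases Finset.mem_union.mp hx with hx0 | hx0
    · obtain ⟨u, hu, rfl⟩ := Finset.mem_image.mp hx0
      have huv : u = v := injc0 u (hBstW hu) v (hBodW hv) hveq.symm
      subst huv
      apply hS (c0 (N:=N) u) (hmemS_ev (Finset.filter_subset _ _ hu))
      rw [c0_add_one]
      exact hmemS_od hv
    · obtain ⟨u, hu, rfl⟩ := Finset.mem_image.mp hx0
      exact c0_ne_c1 hN0 v (u-1) hveq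
  have hinjBev : Set.InjOn (c0 (N:=N)) ↑Bev := fun u hu v hv h =>
    injc0 u (hBevW hu) v (hBevW hv) h
  have hinjBst : Set.InjOn (c0 (N:=N)) ↑Bst := fun u hu v hv h =>
    injc0 u (hBstW hu) v (hBstW hv) h
  have hinjBsh : Set.InjOn (fun n => c1 (N:=N) (n-1)) ↑Bsh := fun u hu v hv h =>
    injc1s u (hBshW hu) v (hBshW hv) h
  have hinjBod : Set.InjOn (c1 (N:=N)) ↑Bod := fun u hu v hv h =>
    injc1 u (hBodW hu) v (hBodW hv) h
  have hinjBod0 : Set.InjOn (c0 (N:=N)) ↑Bod := fun u hu v hv h =>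
    injc0 u (hBodW hu) v (hBodW hv) h
  have hcardS : S.card = Bev.card + Bod.card := by
    rw [hdecomp, Finset.card_union_of_disjoint hdisj0,
        Finset.card_image_of_injOn hinjBev, Finset.card_image_of_injOn hinjBod]
  have hcardT : T.card = S.card := by
    rw [hT, Finset.card_union_of_disjoint hd2, Finset.card_union_of_disjoint hd1,
        Finset.card_image_of_injOn hinjBst, Finset.card_image_of_injOn hinjBsh,
        Finset.card_image_of_injOn hinjBod0, hcardS]
    have := Finset.card_filter_add_card_filter_not (s := Bev) (p := stayA)
    rw [← hBst, ← hBsh] at this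
    omega
  have hTsparse : ∀ x ∈ T, x + 1 ∉ T := by
    intro x hx hx1
    rw [hT] at hx hx1
    rcases Finset.mem_union.mp hx with hx' | hx'
    · rcases Finset.mem_union.mp hx' with hx'' | hx''
      · -- x = c0 u, u ∈ Bst ; x+1 = c1 u
        obtain ⟨u, hu, rfl⟩ := Finset.mem_image.mp hx''
        rw [c0_add_one] at hx1
        rcases Finset.mem_union.mp hx1 with hy | hy
        · rcases Finset.mem_union.mp hy with hy' | hy'
          · obtain ⟨v, hv, hveq⟩ := Finset.mem_image.mp hy'
            exact c0_ne_c1 hN0 v u hveq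
          · -- c1 (v-1) = c1 u, v ∈ Bsh
            obtain ⟨v, hv, hveq⟩ := Finset.mem_image.mp hy'
            have hd := (c1_eq_iff hN0 (v-1) u).mp hveq
            obtain ⟨t, ht⟩ := hd
            have hstayu : stayA u := (Finset.mem_filter.mp hu).2
            have huS : c0 (N:=N) u ∈ S := hmemS_ev (Finset.filter_subset _ _ hu)
            have hstayv : stayA v := by
              rw [show (v : ℤ) = (u+1) + N*(-t) by linarith]
              exact (stay_per (u+1) (-t)).mpr (stayclose u huS hstayu)
            exact (Finset.mem_filter.mp hv).2 hstayv
        · obtain ⟨v, hv, hveq⟩ := Finset.mem_image.mp hy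
          exact c0_ne_c1 hN0 v u hveq
      · -- x = c1 (u-1), u ∈ Bsh ; x+1 = c0 u
        obtain ⟨u, hu, rfl⟩ := Finset.mem_image.mp hx''
        rw [c1_add_one, show (u - 1 + 1 : ℤ) = u by ring] at hx1
        rcases Finset.mem_union.mp hx1 with hy | hy
        · rcases Finset.mem_union.mp hy with hy' | hy'
          · -- c0 v = c0 u, v ∈ Bst
            obtain ⟨v, hv, hveq⟩ := Finset.mem_image.mp hy'
            have := injc0 v (hBstW hv) u (hBshW hu) hveq
            subst this
            exact (Finset.mem_filter.mp hu).2 (Finset.mem_filter.mp hv).2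
          · obtain ⟨v, hv, hveq⟩ := Finset.mem_image.mp hy'
            exact c0_ne_c1 hN0 u (v-1) hveq.symm
        · -- c0 v = c0 u, v ∈ Bod
          obtain ⟨v, hv, hveq⟩ := Finset.mem_image.mp hy
          have := injc0 v (hBodW hv) u (hBshW hu) hveq
          subst this
          apply hS (c0 (N:=N) v) (hmemS_ev (Finset.filter_subset _ _ hu))
          rw [c0_add_one]
          exact hmemS_od hv
    · -- x = c0 u, u ∈ Bod ; x+1 = c1 u
      obtain ⟨u, hu, rfl⟩ := Finset.mem_image.mp hx'
      rw [c0_add_one] at hx1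
      rcases Finset.mem_union.mp hx1 with hy | hy
      · rcases Finset.mem_union.mp hy with hy' | hy'
        · obtain ⟨v, hv, hveq⟩ := Finset.mem_image.mp hy'
          exact c0_ne_c1 hN0 v u hveq
        · -- c1 (v-1) = c1 u, v ∈ Bsh
          obtain ⟨v, hv, hveq⟩ := Finset.mem_image.mp hy'
          have hd := (c1_eq_iff hN0 (v-1) u).mp hveq
          obtain ⟨t, ht⟩ := hd
          have hvS : c0 (N:=N) v ∈ S := hmemS_ev (Finset.filter_subset _ _ hv)
          have h1 : c0 (N:=N) (u+1) ∈ S := by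
            rw [show (u+1 : ℤ) = v + N*t by omega, c0_per]
            exact hvS
          apply hS (c1 (N:=N) u) (hmemS_od hu)
          rwa [c1_add_one]
      · obtain ⟨v, hv, hveq⟩ := Finset.mem_image.mp hy
        exact c0_ne_c1 hN0 v u hveq
  -- sums
  have hsum_S : ∑ i ∈ S, A i
      = ∑ n ∈ Bst, QQ A n + ∑ n ∈ Bsh, QQ A n + ∑ n ∈ Bod, EE A n := by
    rw [hdecomp, Finset.sum_union hdisj0, Finset.sum_image hinjBev,
        Finset.sum_image hinjBod]
    have := Finset.sum_filter_add_sum_filter_not Bev stayA (fun n => A (c0 (N:=N) n))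
    rw [← hBst, ← hBsh] at this
    rw [← this]
    rfl
  have hsum_T : ∑ i ∈ T, Abar i
      = ∑ n ∈ Bst, QQ Abar n + ∑ n ∈ Bsh, EE Abar (n-1) + ∑ n ∈ Bod, QQ Abar n := by
    rw [hT, Finset.sum_union hd2, Finset.sum_union hd1, Finset.sum_image hinjBst,
        Finset.sum_image hinjBsh, Finset.sum_image hinjBod0]
    rfl
  have hBsh_eq : ∑ n ∈ Bsh, EE Abar (n-1) = ∑ n ∈ Bsh, QQ A n := by
    apply Finset.sum_congr rfl
    intro n hn
    have h1 := notbad_Eb A Abar hN hq heb (n-1)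
      (shiftgood n (Finset.mem_filter.mp hn).2)
    rwa [show (n - 1 + 1 : ℤ) = n by ring] at h1
  have hBod_le : ∑ n ∈ Bod, QQ Abar n ≤ ∑ n ∈ Bod, EE A n :=
    Finset.sum_le_sum (fun n _ => Qb_le A Abar hN hq n)
  have hBst_le : ∑ n ∈ Bst, QQ Abar n ≤ ∑ n ∈ Bst, QQ A n := by
    have h1 : ∑ n ∈ Bst, QQ A n - ∑ n ∈ Bst, QQ Abar n
        = ∑ n ∈ Bst, (YY A hN (n+1) - YY A hN n) := by
      rw [← Finset.sum_sub_distrib]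
      apply Finset.sum_congr rfl
      intro n _
      rw [Qb_id A Abar hN hq hD n]
      ring
    have h2 := tele_ge' (YY A hN) (YY_nonneg A hN) Bst hstartA
    linarith
  refine ⟨T, hcardT, hTsparse, ?_⟩
  rw [hsum_S, hsum_T]
  linarith
end mainA

section assemble
variable {N : ℕ}

lemma sum_univ_split [NeZero (2*N)] (hN0 : 0 < N) (f : ZMod (2*N) → ℝ) :
    ∑ i : ZMod (2*N), f i
      = ∑ n ∈ Finset.Icc ((0:ℤ)+1) (0+(N:ℤ)), (f (c0 n) + f (c1 n)) := by
  classical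
  have hdisj : Disjoint ((Finset.Icc ((0:ℤ)+1) (0+(N:ℤ))).image (c0 (N:=N)))
      ((Finset.Icc ((0:ℤ)+1) (0+(N:ℤ))).image (c1 (N:=N))) := by
    rw [Finset.disjoint_left]
    rintro x hx hx'
    obtain ⟨u, hu, rfl⟩ := Finset.mem_image.mp hx
    obtain ⟨v, hv, hveq⟩ := Finset.mem_image.mp hx'
    exact c0_ne_c1 hN0 u v hveq.symm
  have huniv : (Finset.univ : Finset (ZMod (2*N)))
      = (Finset.Icc ((0:ℤ)+1) (0+(N:ℤ))).image (c0 (N:=N))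
        ∪ (Finset.Icc ((0:ℤ)+1) (0+(N:ℤ))).image (c1 (N:=N)) := by
    ext i
    simp only [Finset.mem_univ, true_iff, Finset.mem_union, Finset.mem_image]
    obtain ⟨n, h1, h2, hrep⟩ := exists_rep hN0 i 0
    rcases hrep with h | h
    · exact Or.inl ⟨n, Finset.mem_Icc.mpr ⟨h1, h2⟩, h.symm⟩
    · exact Or.inr ⟨n, Finset.mem_Icc.mpr ⟨h1, h2⟩, h.symm⟩
  rw [show ∑ i : ZMod (2*N), f i = ∑ i ∈ Finset.univ, f i from rfl, huniv,
      Finset.sum_union hdisj, Finset.sum_image (window_c0_injOn hN0 0),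
      Finset.sum_image (window_c1_injOn hN0 0), ← Finset.sum_add_distrib]

lemma total_sum [NeZero (2*N)] (hN : 2 ≤ N) (A Abar : ZMod (2*N) → ℝ)
    (heb : ∀ n, EE Abar n = EE A n + QQ A (n+1) - QQ Abar n) :
    ∑ i : ZMod (2*N), Abar i = ∑ i : ZMod (2*N), A i := by
  have hN0 : 0 < N := by omega
  rw [sum_univ_split hN0 Abar, sum_univ_split hN0 A]
  have h1 : ∀ n : ℤ, (Abar (c0 n) + Abar (c1 n)) - (A (c0 n) + A (c1 n))
      = -(QQ A n - QQ A (n+1)) := by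
    intro n
    show (QQ Abar n + EE Abar n) - (QQ A n + EE A n) = _
    rw [heb n]
    ring
  have hperQ : ∀ n : ℤ, QQ A (n + N) = QQ A n := by
    intro n
    have := QQ_per A n 1
    rwa [mul_one] at this
  have h3 := sum_tele_window hN (QQ A) hperQ 0
  have h4 : ∑ n ∈ Finset.Icc ((0:ℤ)+1) (0+(N:ℤ)),
        ((Abar (c0 (N:=N) n) + Abar (c1 n)) - (A (c0 n) + A (c1 n)))
      = -∑ n ∈ Finset.Icc ((0:ℤ)+1) (0+(N:ℤ)), (QQ A n - QQ A (n+1)) := by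
    rw [← Finset.sum_neg_distrib]
    exact Finset.sum_congr rfl (fun n _ => h1 n)
  rw [Finset.sum_sub_distrib] at h4
  linarith

lemma sparse_exists (hN0 : 0 < N) (k : ℕ) (hk : k ≤ N) :
    ∃ S : Finset (ZMod (2*N)), S.card = k ∧ (∀ i ∈ S, i + 1 ∉ S) := by
  classical
  refine ⟨(Finset.Icc (1:ℤ) (k:ℤ)).image (c0 (N:=N)), ?_, ?_⟩
  · rw [Finset.card_image_of_injOn, Int.card_Icc]
    · omega
    · intro u hu v hv h
      simp only [Finset.coe_Icc, Set.mem_Icc] at hu hv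
      exact window_inj hN0 0 u v (by omega) (by omega) (by omega) (by omega)
        ((c0_eq_iff hN0 u v).mp h)
  · intro x hx hx1
    obtain ⟨u, hu, rfl⟩ := Finset.mem_image.mp hx
    rw [c0_add_one] at hx1
    obtain ⟨v, hv, hveq⟩ := Finset.mem_image.mp hx1
    exact c0_ne_c1 hN0 v u hveq

lemma bdd_vals [NeZero (2*N)] (A : ZMod (2*N) → ℝ) (k : ℕ) :
    BddBelow {s : ℝ | ∃ S : Finset (ZMod (2*N)),
      S.card = k ∧ (∀ i ∈ S, i + 1 ∉ S) ∧ s = ∑ i ∈ S, A i} := by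
  refine ⟨-(∑ i : ZMod (2*N), |A i|), ?_⟩
  rintro s ⟨S, _, _, rfl⟩
  have h1 : ∑ i ∈ S, -|A i| ≤ ∑ i ∈ S, A i :=
    Finset.sum_le_sum (fun i _ => neg_abs_le _)
  have h2 : ∑ i ∈ S, |A i| ≤ ∑ i : ZMod (2*N), |A i| :=
    Finset.sum_le_sum_of_subset_of_nonneg (Finset.subset_univ S)
      (fun i _ _ => abs_nonneg _)
  have h3 : ∑ i ∈ S, -|A i| = -∑ i ∈ S, |A i| := Finset.sum_neg_distrib _
  show -(∑ i : ZMod (2*N), |A i|) ≤ ∑ i ∈ S, A i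
  linarith

end assemble

end TT

/-- The `k`-th tropical conserved quantity: the minimum, over all cyclically sparse
subsets `S ⊆ ℤ/2Nℤ` (no two elements adjacent on the cycle) with `|S| = k`, of
`∑_{i ∈ S} A i`. -/
noncomputable def Htrop (N : ℕ) (A : ZMod (2 * N) → ℝ) (k : ℕ) : ℝ :=
  sInf {s : ℝ | ∃ S : Finset (ZMod (2 * N)),
    S.card = k ∧ (∀ i ∈ S, i + 1 ∉ S) ∧ s = ∑ i ∈ S, A i}

/-- The quantities `H_k` (`1 ≤ k ≤ N`) and the total sum are conserved under the
tropical periodic Toda lattice evolution. -/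
theorem trop_toda_conserved (N : ℕ) (hN : 2 ≤ N) [NeZero (2 * N)]
    (A Abar : ZMod (2 * N) → ℝ)
    (hphase : ∑ l ∈ Finset.range N, A ((2 * l + 2 : ℕ) : ZMod (2 * N))
      < ∑ l ∈ Finset.range N, A ((2 * l + 1 : ℕ) : ZMod (2 * N)))
    (hev1 : ∀ n : ℤ, Abar ((2 * n : ℤ) : ZMod (2 * N))
      = min (A ((2 * n + 1 : ℤ) : ZMod (2 * N)))
          (A ((2 * n : ℤ) : ZMod (2 * N)) -
            (Finset.range N).inf' (Finset.nonempty_range_iff.mpr (by omega))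
              (fun k => ∑ l ∈ Finset.Icc 1 k,
                (A ((2 * (n - (l : ℤ)) + 1 : ℤ) : ZMod (2 * N))
                  - A ((2 * (n - (l : ℤ)) : ℤ) : ZMod (2 * N))))))
    (hev2 : ∀ n : ℤ, Abar ((2 * n + 1 : ℤ) : ZMod (2 * N))
      = A ((2 * n + 1 : ℤ) : ZMod (2 * N)) + A ((2 * n + 2 : ℤ) : ZMod (2 * N))
        - Abar ((2 * n : ℤ) : ZMod (2 * N))) :
    (∀ k, 1 ≤ k → k ≤ N → Htrop N Abar k = Htrop N A k) ∧
      (∑ i : ZMod (2 * N), Abar i = ∑ i : ZMod (2 * N), A i) := by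
  have hN0 : 0 < N := by omega
  have hD : 0 < TT.DD A := TT.hD_of_hphase A hphase
  have hq : ∀ n, TT.QQ Abar n = min (TT.EE A n) (TT.QQ A n + TT.YY A hN n) :=
    fun n => TT.Qb_eq A Abar hN hev1 n
  have heb : ∀ n, TT.EE Abar n = TT.EE A n + TT.QQ A (n+1) - TT.QQ Abar n :=
    fun n => TT.Eb_eq A Abar hev2 n
  constructor
  · intro k hk1 hkN
    obtain ⟨S0, hS0card, hS0sp⟩ := TT.sparse_exists hN0 k hkN
    have hneA : {s : ℝ | ∃ S : Finset (ZMod (2 * N)),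
        S.card = k ∧ (∀ i ∈ S, i + 1 ∉ S) ∧ s = ∑ i ∈ S, A i}.Nonempty :=
      ⟨∑ i ∈ S0, A i, S0, hS0card, hS0sp, rfl⟩
    have hneAbar : {s : ℝ | ∃ S : Finset (ZMod (2 * N)),
        S.card = k ∧ (∀ i ∈ S, i + 1 ∉ S) ∧ s = ∑ i ∈ S, Abar i}.Nonempty :=
      ⟨∑ i ∈ S0, Abar i, S0, hS0card, hS0sp, rfl⟩
    unfold Htrop
    apply le_antisymm
    · apply le_csInf hneA
      rintro b ⟨S, hcard, hsp, rfl⟩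
      obtain ⟨T, hTcard, hTsp, hTle⟩ := TT.dirA hN A Abar hq heb hD S hsp
      exact le_trans
        (csInf_le (TT.bdd_vals Abar k) ⟨T, hTcard.trans hcard, hTsp, rfl⟩) hTle
    · apply le_csInf hneAbar
      rintro b ⟨S, hcard, hsp, rfl⟩
      obtain ⟨T, hTcard, hTsp, hTle⟩ := TT.dirB hN A Abar hq heb hD S hsp
      exact le_trans
        (csInf_le (TT.bdd_vals A k) ⟨T, hTcard.trans hcard, hTsp, rfl⟩) hTle
  · exact TT.total_sum hN A Abar heb
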